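/- If G=(V,E) is a sparse graph with |V| > 1 and max-tight decomposition {G_i=(V_i,E_i)}_{i∈I}, then there exists a marking m : Z → V for G such that the reduced graph G^m is sparse and the family {G_i^m}_{i∈I^m} is a max-tight decomposition for G^m. -/
import Mathlib


open scoped Classical

noncomputable section

/-- The squared distance function on `ℂ²`. -/
def sd (x y : ℂ × ℂ) : ℂ := (x.1 - y.1) ^ 2 + (x.2 - y.2) ^ 2

/-- Membership in the transformation group `T`. -/
def IsTransf (t : ℂ × ℂ → ℂ × ℂ) : Prop :=
  ∃ c s u v : ℂ, c ^ 2 + s ^ 2 = 1 ∧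
    ∀ x, t x = (c * x.1 - s * x.2 + u, s * x.1 + c * x.2 + v)

variable {α : Type*} [DecidableEq α]

/-- `(V, E)` is a finite simple undirected graph: edges are non-diagonal
unordered pairs with both endpoints in `V`. -/
def IsGraph (V : Finset α) (E : Finset (Sym2 α)) : Prop :=
  ∀ e ∈ E, ¬ e.IsDiag ∧ ∀ v ∈ e, v ∈ V

/-- `(V', E')` is a subgraph of `(V, E)`. -/
def IsSubgraph (V' : Finset α) (E' : Finset (Sym2 α))
    (V : Finset α) (E : Finset (Sym2 α)) : Prop :=
  IsGraph V' E' ∧ V' ⊆ V ∧ E' ⊆ E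

/-- A graph is sparse if every subgraph `(V', E')` with `|V'| ≥ 2`
satisfies `|E'| ≤ 2|V'| - 3`. -/
def IsSparse (V : Finset α) (E : Finset (Sym2 α)) : Prop :=
  IsGraph V E ∧ ∀ V' E', IsSubgraph V' E' V E → 2 ≤ V'.card →
    (E'.card : ℤ) ≤ 2 * V'.card - 3

/-- A graph is tight if it is sparse and `|V| = 1` or `|E| = 2|V| - 3`. -/
def IsTight (V : Finset α) (E : Finset (Sym2 α)) : Prop :=
  IsSparse V E ∧ (V.card = 1 ∨ (E.card : ℤ) = 2 * V.card - 3)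

/-- `(V', E')` is a max-tight subgraph of `(V, E)`. -/
def IsMaxTight (V' : Finset α) (E' : Finset (Sym2 α))
    (V : Finset α) (E : Finset (Sym2 α)) : Prop :=
  IsSubgraph V' E' V E ∧ IsTight V' E' ∧
    ∀ V'' E'', IsSubgraph V'' E'' V E → IsTight V'' E'' →
      V' ⊆ V'' → E' ⊆ E'' → V' = V'' ∧ E' = E''

/-- `{(Vi i, Ei i)}_{i ∈ I}` is a max-tight decomposition of `(V, E)`. -/
def IsMaxTightDecomp {I : Type*} (V : Finset α) (E : Finset (Sym2 α))
    (Vi : I → Finset α) (Ei : I → Finset (Sym2 α)) : Prop :=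
  (∀ i, IsMaxTight (Vi i) (Ei i) V E) ∧
  (∀ v ∈ V, ∃ i, v ∈ Vi i) ∧
  (∀ e ∈ E, ∃ i, e ∈ Ei i) ∧
  (∀ i j, i ≠ j → ∀ e, ¬ (e ∈ Ei i ∧ e ∈ Ei j))

/-- Extend a realization of `V` to all of `α` (by zero off `V`). -/
def extendR (V : Finset α) (r : ↥V → ℂ × ℂ) : α → ℂ × ℂ :=
  fun a => if h : a ∈ V then r ⟨a, h⟩ else 0

/-- The squared distance along an unordered pair of vertices. -/
def edgeVal (r : α → ℂ × ℂ) : Sym2 α → ℂ :=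
  Sym2.lift ⟨fun u v => sd (r u) (r v), fun u v => by simp only [sd]; ring⟩

/-- The edge map `E_G : (ℂ²)^V → ℂ^E`. -/
def edgeMap (V : Finset α) (E : Finset (Sym2 α)) (r : ↥V → ℂ × ℂ) :
    {e // e ∈ E} → ℂ :=
  fun e => edgeVal (extendR V r) e.1

/-- The set `E_G⁻¹(λ)` of `λ`-compatible realizations. -/
def fiber (V : Finset α) (E : Finset (Sym2 α)) (lam : {e // e ∈ E} → ℂ) :
    Set (↥V → ℂ × ℂ) :=
  {r | edgeMap V E r = lam}

/-- The set of equivalence classes of `S` under `r ∼ s ↔ ∃ t ∈ T, s = t ∘ r`. -/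
def TClasses {β : Type*} (S : Set (β → ℂ × ℂ)) : Set (Set (β → ℂ × ℂ)) :=
  {C | ∃ r ∈ S, C = {s | s ∈ S ∧ ∃ t, IsTransf t ∧ s = fun v => t (r v)}}

/-- The coordinates of a realization, as a point of affine space with
coordinate ring `ℂ[x_v, y_v : v ∈ β]`. -/
def coords {β : Type*} (r : β → ℂ × ℂ) : β × Fin 2 → ℂ :=
  fun p => if p.2 = 0 then (r p.1).1 else (r p.1).2

/-- The vanishing ideal of a set of realizations in `ℂ[x_v, y_v : v ∈ β]`. -/
def vanishingIdeal {β : Type*} (S : Set (β → ℂ × ℂ)) :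
    Ideal (MvPolynomial (β × Fin 2) ℂ) where
  carrier := {f | ∀ r ∈ S, MvPolynomial.eval (coords r) f = 0}
  add_mem' := by
    intro a b ha hb r hr
    simp only [Set.mem_setOf_eq] at ha hb ⊢
    simp [map_add, ha r hr, hb r hr]
  zero_mem' := by intro r hr; simp
  smul_mem' := by
    intro c f hf r hr
    simp only [Set.mem_setOf_eq] at hf ⊢
    simp [smul_eq_mul, map_mul, hf r hr]

end

noncomputable section

open scoped Classical

variable {α : Type*} [DecidableEq α]

/-- `E[v]`: the set of edges of `E` containing the vertex `v`. -/
def edgesAt (E : Finset (Sym2 α)) (v : α) : Finset (Sym2 α) :=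
  E.filter (fun e => v ∈ e)

/-- `(V, E)` is a 1-extension of `(V', E')` with respect to the vertex `v0`
and the edge `{v2, v3}`. -/
def Is1Ext (V : Finset α) (E : Finset (Sym2 α))
    (V' : Finset α) (E' : Finset (Sym2 α)) (v0 v2 v3 : α) : Prop :=
  ∃ v1, v0 ∉ V' ∧ v1 ∈ V' ∧ v2 ∈ V' ∧ v3 ∈ V' ∧
    v1 ≠ v2 ∧ v1 ≠ v3 ∧ v2 ≠ v3 ∧ s(v2, v3) ∈ E' ∧
    V = insert v0 V' ∧
    E = (E'.erase s(v2, v3)) ∪ {s(v0, v1), s(v0, v2), s(v0, v3)}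

/-- `m` is a marking for the sparse graph `(V, E)` with max-tight decomposition
`{(Vi i, Ei i)}_{i ∈ I}`, where `Z = {0, …, k-1}` with `1 ≤ k ≤ 4`. -/
def IsMarking {I : Type*} (V : Finset α) (E : Finset (Sym2 α))
    (Vi : I → Finset α) (Ei : I → Finset (Sym2 α)) (k : ℕ) (m : ℕ → α) : Prop :=
  1 ≤ k ∧ k ≤ 4 ∧ 1 < V.card ∧
  (∀ z ∈ Finset.range k, m z ∈ V) ∧
  Set.InjOn m ↑(Finset.range k) ∧
  edgesAt E (m 0) = ((Finset.range k).erase 0).image (fun z => s(m 0, m z)) ∧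
  (∀ i : I, k = 4 → (Finset.range k).image m ⊆ Vi i →
    ∃ (V' : Finset α) (E' : Finset (Sym2 α)), IsTight V' E' ∧
      Is1Ext (Vi i) (Ei i) V' E' (m 0) (m 2) (m 3))

/-- `V_i^m = V_i ∖ {m 0}`. -/
def Vm {I : Type*} (Vi : I → Finset α) (m : ℕ → α) (i : I) : Finset α :=
  (Vi i).erase (m 0)

/-- `E_i^m`: remove the edges at `m 0` and, in the 1-extension case, put the
edge `{m 2, m 3}` back in. -/
def Em {I : Type*} (Vi : I → Finset α) (Ei : I → Finset (Sym2 α))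
    (k : ℕ) (m : ℕ → α) (i : I) : Finset (Sym2 α) :=
  if k = 4 ∧ (Finset.range k).image m ⊆ Vi i then
    (Ei i).filter (fun e => m 0 ∉ e) ∪ {s(m 2, m 3)}
  else (Ei i).filter (fun e => m 0 ∉ e)

/-- `I^m = {i ∈ I : V_i ≠ {m 0} and |E_i[m 0]| ≠ 1}`. -/
def inIm {I : Type*} (Vi : I → Finset α) (Ei : I → Finset (Sym2 α))
    (m : ℕ → α) (i : I) : Prop :=
  Vi i ≠ {m 0} ∧ (edgesAt (Ei i) (m 0)).card ≠ 1

/-- The vertex set `V^m = ⋃_{i ∈ I^m} V_i^m` of the reduced graph `G^m`. -/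
def redV {I : Type*} [Fintype I] (Vi : I → Finset α) (Ei : I → Finset (Sym2 α))
    (m : ℕ → α) : Finset α :=
  (Finset.univ.filter (inIm Vi Ei m)).biUnion (Vm Vi m)

/-- The edge set `E^m = ⋃_{i ∈ I^m} E_i^m` of the reduced graph `G^m`. -/
def redE {I : Type*} [Fintype I] (Vi : I → Finset α) (Ei : I → Finset (Sym2 α))
    (k : ℕ) (m : ℕ → α) : Finset (Sym2 α) :=
  (Finset.univ.filter (inIm Vi Ei m)).biUnion (Em Vi Ei k m)

section Aux
set_option linter.unusedSectionVars false
variable {α : Type*} [DecidableEq α]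

lemma IsSubgraph.trans' {V1 V2 V3 : Finset α} {E1 E2 E3 : Finset (Sym2 α)}
    (h12 : IsSubgraph V1 E1 V2 E2) (h23 : IsSubgraph V2 E2 V3 E3) :
    IsSubgraph V1 E1 V3 E3 :=
  ⟨h12.1, h12.2.1.trans h23.2.1, h12.2.2.trans h23.2.2⟩

lemma sparse_of_subgraph {V V' : Finset α} {E E' : Finset (Sym2 α)}
    (hS : IsSparse V E) (h : IsSubgraph V' E' V E) : IsSparse V' E' :=
  ⟨h.1, fun V2 E2 h2 hc => hS.2 V2 E2 (h2.trans' h) hc⟩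

lemma graph_edges_empty {S : Finset α} {F : Finset (Sym2 α)}
    (h : IsGraph S F) (hS : S.card ≤ 1) : F = ∅ := by
  rw [Finset.eq_empty_iff_forall_notMem]
  intro e he
  obtain ⟨hd, hm⟩ := h e he
  induction e using Sym2.inductionOn with
  | _ x y =>
    rw [Sym2.mk_isDiag_iff] at hd
    have hx : x ∈ S := hm x (by simp [Sym2.mem_iff])
    have hy : y ∈ S := hm y (by simp [Sym2.mem_iff])
    have : ({x, y} : Finset α).card ≤ S.card := by
      apply Finset.card_le_card; intro v hv
      rcases Finset.mem_insert.1 hv with rfl | hv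
      · exact hx
      · exact Finset.mem_singleton.1 hv ▸ hy
    rw [Finset.card_pair hd] at this
    omega

lemma tight_card_eq {Vi : Finset α} {Ei : Finset (Sym2 α)}
    (ht : IsTight Vi Ei) (h2 : 2 ≤ Vi.card) : (Ei.card : ℤ) = 2 * Vi.card - 3 := by
  rcases ht.2 with h | h
  · omega
  · exact h

lemma tight_nonempty {Vi : Finset α} {Ei : Finset (Sym2 α)}
    (ht : IsTight Vi Ei) : Vi.Nonempty := by
  rcases Nat.eq_zero_or_pos Vi.card with h | h
  · exfalso
    rcases ht.2 with h1 | h1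
    · omega
    · have : Ei = ∅ := graph_edges_empty ht.1.1 (by omega)
      rw [this] at h1; simp at h1; omega
  · exact Finset.card_pos.1 h

lemma edge_mem_tight {V Vi : Finset α} {E Ei : Finset (Sym2 α)}
    (hS : IsSparse V E) (hsub : IsSubgraph Vi Ei V E) (ht : IsTight Vi Ei)
    {e : Sym2 α} (he : e ∈ E) (hend : ∀ v ∈ e, v ∈ Vi) (hcard : 2 ≤ Vi.card) :
    e ∈ Ei := by
  by_contra hne
  have hsub' : IsSubgraph Vi (insert e Ei) V E := by
    refine ⟨?_, hsub.2.1, Finset.insert_subset he hsub.2.2⟩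
    intro e' he'
    rcases Finset.mem_insert.1 he' with heq | he'
    · exact heq ▸ ⟨(hS.1 e he).1, hend⟩
    · exact hsub.1 e' he'
  have h1 := hS.2 Vi (insert e Ei) hsub' hcard
  rw [Finset.card_insert_of_notMem hne] at h1
  have h2 := tight_card_eq ht hcard
  push_cast at h1
  omega

lemma edge_out {V : Finset α} {E : Finset (Sym2 α)} (hG : IsGraph V E)
    {e : Sym2 α} (he : e ∈ E) {v0 : α} (hv : v0 ∈ e) :
    ∃ w, w ≠ v0 ∧ w ∈ V ∧ e = s(v0, w) := by
  refine ⟨Sym2.Mem.other' hv, ?_, (hG e he).2 _ (Sym2.other_mem' hv), (Sym2.other_spec' hv).symm⟩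
  intro h
  have := Sym2.other_spec' hv
  rw [h] at this
  have hd := (hG e he).1
  rw [← this, Sym2.mk_isDiag_iff] at hd
  exact hd rfl

lemma exists_low_degree {V : Finset α} {E : Finset (Sym2 α)}
    (hS : IsSparse V E) (hV : 2 ≤ V.card) : ∃ v ∈ V, (edgesAt E v).card ≤ 3 := by
  by_contra h
  push_neg at h
  have key : ∀ e ∈ E, (V.filter (fun v => v ∈ e)).card = 2 := by
    intro e he
    obtain ⟨hd, hm⟩ := hS.1 e he
    revert hd hm
    induction e using Sym2.inductionOn with
    | _ x y =>
      intro hd hm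
      rw [Sym2.mk_isDiag_iff] at hd
      have : V.filter (fun v => v ∈ s(x, y)) = {x, y} := by
        ext v
        simp only [Finset.mem_filter, Sym2.mem_iff, Finset.mem_insert, Finset.mem_singleton]
        constructor
        · rintro ⟨_, h⟩; exact h
        · rintro (rfl | rfl)
          · exact ⟨hm v (by simp [Sym2.mem_iff]), Or.inl rfl⟩
          · exact ⟨hm v (by simp [Sym2.mem_iff]), Or.inr rfl⟩
      rw [this, Finset.card_pair hd]
  have hsum : ∑ v ∈ V, (edgesAt E v).card = 2 * E.card := by
    calc ∑ v ∈ V, (edgesAt E v).card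
        = ∑ v ∈ V, ∑ e ∈ E, if v ∈ e then 1 else 0 := by
          refine Finset.sum_congr rfl fun v _ => ?_
          rw [edgesAt, Finset.card_filter]
      _ = ∑ e ∈ E, ∑ v ∈ V, if v ∈ e then 1 else 0 := Finset.sum_comm
      _ = ∑ e ∈ E, (V.filter (fun v => v ∈ e)).card := by
          refine Finset.sum_congr rfl fun e _ => ?_
          rw [Finset.card_filter]
      _ = ∑ e ∈ E, 2 := Finset.sum_congr rfl key
      _ = 2 * E.card := by simp [Finset.sum_const, mul_comm]
  have hge : 4 * V.card ≤ ∑ v ∈ V, (edgesAt E v).card := by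
    calc 4 * V.card = ∑ _v ∈ V, 4 := by simp [Finset.sum_const, mul_comm]
      _ ≤ ∑ v ∈ V, (edgesAt E v).card := Finset.sum_le_sum (fun v hv => h v hv)
  have hcount := hS.2 V E ⟨hS.1, le_refl _, le_refl _⟩ hV
  omega

end Aux
section Aux2
set_option linter.unusedSectionVars false
variable {α : Type*} [DecidableEq α]

lemma union_count {V V1 V2 : Finset α} {E E1 E2 : Finset (Sym2 α)}
    (hS : IsSparse V E) (h1 : IsSubgraph V1 E1 V E) (h2 : IsSubgraph V2 E2 V E)
    (hc1 : (E1.card : ℤ) = 2 * V1.card - 3) (hc2 : (E2.card : ℤ) = 2 * V2.card - 3)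
    (hint : 2 ≤ (V1 ∩ V2).card) :
    IsSubgraph (V1 ∪ V2) (E1 ∪ E2) V E ∧
      ((E1 ∪ E2).card : ℤ) = 2 * (V1 ∪ V2).card - 3 := by
  have hUsub : IsSubgraph (V1 ∪ V2) (E1 ∪ E2) V E := by
    refine ⟨?_, Finset.union_subset h1.2.1 h2.2.1, Finset.union_subset h1.2.2 h2.2.2⟩
    intro e he
    rcases Finset.mem_union.1 he with he | he
    · exact ⟨(h1.1 e he).1, fun v hv => Finset.mem_union_left _ ((h1.1 e he).2 v hv)⟩
    · exact ⟨(h2.1 e he).1, fun v hv => Finset.mem_union_right _ ((h2.1 e he).2 v hv)⟩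
  have hIsub : IsSubgraph (V1 ∩ V2) (E1 ∩ E2) V E := by
    refine ⟨?_, (Finset.inter_subset_left).trans h1.2.1,
      (Finset.inter_subset_left).trans h1.2.2⟩
    intro e he
    have hm := Finset.mem_inter.1 he
    exact ⟨(h1.1 e hm.1).1, fun v hv =>
      Finset.mem_inter.2 ⟨(h1.1 e hm.1).2 v hv, (h2.1 e hm.2).2 v hv⟩⟩
  have hIcard := hS.2 _ _ hIsub hint
  have hUcard := hS.2 _ _ hUsub
    (le_trans hint (Finset.card_le_card ((Finset.inter_subset_left).trans Finset.subset_union_left)))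
  have hVsum := Finset.card_union_add_card_inter V1 V2
  have hEsum := Finset.card_union_add_card_inter E1 E2
  refine ⟨hUsub, ?_⟩
  push_cast at *
  omega

lemma union_tight {V V1 V2 : Finset α} {E E1 E2 : Finset (Sym2 α)}
    (hS : IsSparse V E) (h1 : IsSubgraph V1 E1 V E) (h2 : IsSubgraph V2 E2 V E)
    (t1 : IsTight V1 E1) (t2 : IsTight V2 E2) (hint : 2 ≤ (V1 ∩ V2).card) :
    IsSubgraph (V1 ∪ V2) (E1 ∪ E2) V E ∧ IsTight (V1 ∪ V2) (E1 ∪ E2) := by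
  have hc1 := tight_card_eq t1 (le_trans hint (Finset.card_le_card Finset.inter_subset_left))
  have hc2 := tight_card_eq t2 (le_trans hint (Finset.card_le_card Finset.inter_subset_right))
  obtain ⟨hUsub, hUcard⟩ := union_count hS h1 h2 hc1 hc2 hint
  exact ⟨hUsub, ⟨sparse_of_subgraph hS hUsub, Or.inr hUcard⟩⟩

lemma two_shared_false {I : Type*} {V : Finset α} {E : Finset (Sym2 α)}
    {Vi : I → Finset α} {Ei : I → Finset (Sym2 α)}
    (hS : IsSparse V E) (hDec : IsMaxTightDecomp V E Vi Ei)
    {i j : I} (hij : i ≠ j) {x y : α} (hxy : x ≠ y)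
    (hxi : x ∈ Vi i) (hyi : y ∈ Vi i) (hxj : x ∈ Vi j) (hyj : y ∈ Vi j) : False := by
  have hint : 2 ≤ (Vi i ∩ Vi j).card := by
    have : ({x, y} : Finset α) ⊆ Vi i ∩ Vi j := by
      intro v hv
      rcases Finset.mem_insert.1 hv with rfl | hv
      · exact Finset.mem_inter.2 ⟨hxi, hxj⟩
      · exact Finset.mem_singleton.1 hv ▸ Finset.mem_inter.2 ⟨hyi, hyj⟩
    calc 2 = ({x, y} : Finset α).card := (Finset.card_pair hxy).symm
      _ ≤ _ := Finset.card_le_card this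
  obtain ⟨hUsub, hUt⟩ := union_tight hS ((hDec.1 i).1) ((hDec.1 j).1)
    ((hDec.1 i).2.1) ((hDec.1 j).2.1) hint
  obtain ⟨hVi, hEi⟩ := (hDec.1 i).2.2 _ _ hUsub hUt Finset.subset_union_left
    Finset.subset_union_left
  obtain ⟨hVj, hEj⟩ := (hDec.1 j).2.2 _ _ hUsub hUt Finset.subset_union_right
    Finset.subset_union_right
  have hcardU : 2 ≤ (Vi i ∪ Vi j).card :=
    le_trans hint (Finset.card_le_card ((Finset.inter_subset_left).trans Finset.subset_union_left))
  have hne : (Ei i ∪ Ei j).Nonempty := by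
    rw [← Finset.card_pos]
    have := tight_card_eq hUt hcardU
    omega
  obtain ⟨e, he⟩ := hne
  exact hDec.2.2.2 i j hij e ⟨hEi ▸ he, hEj ▸ he⟩

/-- Lifting a dense-enough subgraph avoiding `v0` by `v0` and three edges
contradicts sparsity. -/
lemma lift3_false {V : Finset α} {E : Finset (Sym2 α)} (hS : IsSparse V E)
    {v0 a b c : α} (hab : a ≠ b) (hac : a ≠ c) (hbc : b ≠ c)
    (hea : s(v0, a) ∈ E) (heb : s(v0, b) ∈ E) (hec : s(v0, c) ∈ E)
    {V' : Finset α} {E' : Finset (Sym2 α)}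
    (hsub : IsSubgraph V' E' V E) (hv0 : v0 ∉ V')
    (haV : a ∈ V') (hbV : b ∈ V') (hcV : c ∈ V')
    (hcard : 2 * (V'.card : ℤ) - 3 ≤ E'.card) : False := by
  have hv0a : v0 ≠ a := fun h => hv0 (h ▸ haV)
  have hv0b : v0 ≠ b := fun h => hv0 (h ▸ hbV)
  have hv0c : v0 ≠ c := fun h => hv0 (h ▸ hcV)
  set A : Finset (Sym2 α) := {s(v0, a), s(v0, b), s(v0, c)} with hA
  have hAcard : A.card = 3 := by
    rw [hA]
    rw [Finset.card_insert_of_notMem, Finset.card_insert_of_notMem, Finset.card_singleton]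
    · simp only [Finset.mem_singleton, Sym2.eq_iff]
      tauto
    · simp only [Finset.mem_insert, Finset.mem_singleton, Sym2.eq_iff]
      tauto
  have hAv0 : ∀ e ∈ A, v0 ∈ e := by
    intro e he
    rw [hA] at he
    rcases Finset.mem_insert.1 he with rfl | he
    · simp [Sym2.mem_iff]
    · rcases Finset.mem_insert.1 he with rfl | he
      · simp [Sym2.mem_iff]
      · rw [Finset.mem_singleton.1 he]; simp [Sym2.mem_iff]
  have hdisj : Disjoint E' A := by
    rw [Finset.disjoint_left]
    intro e he heA
    exact hv0 ((hsub.1 e he).2 v0 (hAv0 e heA))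
  have hv0V : v0 ∈ V := (hS.1 _ hea).2 v0 (by simp [Sym2.mem_iff])
  have hsub' : IsSubgraph (insert v0 V') (E' ∪ A) V E := by
    refine ⟨?_, Finset.insert_subset hv0V hsub.2.1, Finset.union_subset hsub.2.2 ?_⟩
    · intro e he
      rcases Finset.mem_union.1 he with he | he
      · exact ⟨(hsub.1 e he).1, fun v hv =>
          Finset.mem_insert_of_mem ((hsub.1 e he).2 v hv)⟩
      · constructor
        · rw [hA] at he
          rcases Finset.mem_insert.1 he with rfl | he
          · rw [Sym2.mk_isDiag_iff]; exact hv0a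
          · rcases Finset.mem_insert.1 he with rfl | he
            · rw [Sym2.mk_isDiag_iff]; exact hv0b
            · rw [Finset.mem_singleton.1 he, Sym2.mk_isDiag_iff]; exact hv0c
        · intro v hv
          rw [hA] at he
          rcases Finset.mem_insert.1 he with rfl | he
          · rcases Sym2.mem_iff.1 hv with rfl | rfl
            · exact Finset.mem_insert_self _ _
            · exact Finset.mem_insert_of_mem haV
          · rcases Finset.mem_insert.1 he with rfl | he
            · rcases Sym2.mem_iff.1 hv with rfl | rfl
              · exact Finset.mem_insert_self _ _
              · exact Finset.mem_insert_of_mem hbV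
            · rw [Finset.mem_singleton.1 he] at hv
              rcases Sym2.mem_iff.1 hv with rfl | rfl
              · exact Finset.mem_insert_self _ _
              · exact Finset.mem_insert_of_mem hcV
    · rw [hA]
      intro e he
      rcases Finset.mem_insert.1 he with rfl | he
      · exact hea
      · rcases Finset.mem_insert.1 he with rfl | he
        · exact heb
        · exact Finset.mem_singleton.1 he ▸ hec
  have hEcard : (E' ∪ A).card = E'.card + 3 := by
    rw [Finset.card_union_of_disjoint hdisj, hAcard]
  have hVcard : (insert v0 V').card = V'.card + 1 := Finset.card_insert_of_notMem hv0
  have h2 : 2 ≤ (insert v0 V').card := by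
    rw [hVcard]
    have : 0 < V'.card := Finset.card_pos.2 ⟨a, haV⟩
    omega
  have := hS.2 _ _ hsub' h2
  rw [hEcard, hVcard] at this
  push_cast at this
  omega

/-- The pair `{x, y}` is blocked: some tight-count subgraph avoiding `v0`
contains both `x` and `y`. -/
def Blk (V : Finset α) (E : Finset (Sym2 α)) (v0 x y : α) : Prop :=
  ∃ V' E', IsSubgraph V' E' V E ∧ v0 ∉ V' ∧ x ∈ V' ∧ y ∈ V' ∧
    (E'.card : ℤ) = 2 * V'.card - 3

lemma blocked_triple {V : Finset α} {E : Finset (Sym2 α)} (hS : IsSparse V E)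
    {v0 a b c : α}
    (hea : s(v0, a) ∈ E) (heb : s(v0, b) ∈ E) (hec : s(v0, c) ∈ E)
    (hab : a ≠ b) (hac : a ≠ c) (hbc : b ≠ c) :
    ¬ Blk V E v0 a b ∨ ¬ Blk V E v0 b c ∨ ¬ Blk V E v0 a c := by
  by_contra h
  push_neg at h
  obtain ⟨h1, h2, h3⟩ := h
  obtain ⟨V1, E1, hsub1, hv01, ha1, hb1, hc1⟩ := h1
  obtain ⟨V2, E2, hsub2, hv02, hb2, hc2', hc2⟩ := h2
  obtain ⟨V3, E3, hsub3, hv03, ha3, hc3', hc3⟩ := h3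
  by_cases c12 : 2 ≤ (V1 ∩ V2).card
  · obtain ⟨hUsub, hUcard⟩ := union_count hS hsub1 hsub2 hc1 hc2 c12
    exact lift3_false hS hab hac hbc hea heb hec hUsub
      (by simp [hv01, hv02]) (Finset.mem_union_left _ ha1)
      (Finset.mem_union_left _ hb1) (Finset.mem_union_right _ hc2')
      (le_of_eq hUcard.symm)
  by_cases c13 : 2 ≤ (V1 ∩ V3).card
  · obtain ⟨hUsub, hUcard⟩ := union_count hS hsub1 hsub3 hc1 hc3 c13
    exact lift3_false hS hab hac hbc hea heb hec hUsub
      (by simp [hv01, hv03]) (Finset.mem_union_left _ ha1)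
      (Finset.mem_union_left _ hb1) (Finset.mem_union_right _ hc3')
      (le_of_eq hUcard.symm)
  by_cases c23 : 2 ≤ (V2 ∩ V3).card
  · obtain ⟨hUsub, hUcard⟩ := union_count hS hsub2 hsub3 hc2 hc3 c23
    exact lift3_false hS hab hac hbc hea heb hec hUsub
      (by simp [hv02, hv03]) (Finset.mem_union_right _ ha3)
      (Finset.mem_union_left _ hb2) (Finset.mem_union_left _ hc2')
      (le_of_eq hUcard.symm)
  push_neg at c12 c13 c23
  -- pairwise intersections are singletons
  have i12 : V1 ∩ V2 = {b} := by
    have hbm : b ∈ V1 ∩ V2 := Finset.mem_inter.2 ⟨hb1, hb2⟩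
    apply Finset.eq_singleton_iff_unique_mem.2
    exact ⟨hbm, fun x hx => Finset.card_le_one.1 (by omega) x hx b hbm⟩
  have i13 : V1 ∩ V3 = {a} := by
    have ham : a ∈ V1 ∩ V3 := Finset.mem_inter.2 ⟨ha1, ha3⟩
    apply Finset.eq_singleton_iff_unique_mem.2
    exact ⟨ham, fun x hx => Finset.card_le_one.1 (by omega) x hx a ham⟩
  have i23 : V2 ∩ V3 = {c} := by
    have hcm : c ∈ V2 ∩ V3 := Finset.mem_inter.2 ⟨hc2', hc3'⟩
    apply Finset.eq_singleton_iff_unique_mem.2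
    exact ⟨hcm, fun x hx => Finset.card_le_one.1 (by omega) x hx c hcm⟩
  -- the edge sets are pairwise disjoint
  have diag_of_single : ∀ (e : Sym2 α), ¬ e.IsDiag → ∀ (w : α), (∀ v ∈ e, v = w) → False := by
    intro e
    induction e using Sym2.inductionOn with
    | _ x y =>
      intro hd w hm
      rw [Sym2.mk_isDiag_iff] at hd
      have hx := hm x (by simp [Sym2.mem_iff])
      have hy := hm y (by simp [Sym2.mem_iff])
      exact hd (hx.trans hy.symm)
  have d12 : Disjoint E1 E2 := by
    rw [Finset.disjoint_left]
    intro e he1 he2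
    refine diag_of_single e (hsub1.1 e he1).1 b (fun v hv => ?_)
    have : v ∈ V1 ∩ V2 := Finset.mem_inter.2 ⟨(hsub1.1 e he1).2 v hv, (hsub2.1 e he2).2 v hv⟩
    rwa [i12, Finset.mem_singleton] at this
  have d13 : Disjoint E1 E3 := by
    rw [Finset.disjoint_left]
    intro e he1 he3
    refine diag_of_single e (hsub1.1 e he1).1 a (fun v hv => ?_)
    have : v ∈ V1 ∩ V3 := Finset.mem_inter.2 ⟨(hsub1.1 e he1).2 v hv, (hsub3.1 e he3).2 v hv⟩
    rwa [i13, Finset.mem_singleton] at this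
  have d23 : Disjoint E2 E3 := by
    rw [Finset.disjoint_left]
    intro e he2 he3
    refine diag_of_single e (hsub2.1 e he2).1 c (fun v hv => ?_)
    have : v ∈ V2 ∩ V3 := Finset.mem_inter.2 ⟨(hsub2.1 e he2).2 v hv, (hsub3.1 e he3).2 v hv⟩
    rwa [i23, Finset.mem_singleton] at this
  -- counting
  have hEU : (E1 ∪ (E2 ∪ E3)).card = E1.card + E2.card + E3.card := by
    rw [Finset.card_union_of_disjoint (by
      rw [Finset.disjoint_union_right]; exact ⟨d12, d13⟩),
      Finset.card_union_of_disjoint d23]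
    ring
  have hV23 := Finset.card_union_add_card_inter V2 V3
  rw [i23, Finset.card_singleton] at hV23
  have hV123 := Finset.card_union_add_card_inter V1 (V2 ∪ V3)
  have hV1cap : 2 ≤ (V1 ∩ (V2 ∪ V3)).card := by
    have : ({a, b} : Finset α) ⊆ V1 ∩ (V2 ∪ V3) := by
      intro v hv
      rcases Finset.mem_insert.1 hv with rfl | hv
      · exact Finset.mem_inter.2 ⟨ha1, Finset.mem_union_right _ ha3⟩
      · rw [Finset.mem_singleton.1 hv]
        exact Finset.mem_inter.2 ⟨hb1, Finset.mem_union_left _ hb2⟩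
    calc 2 = ({a, b} : Finset α).card := (Finset.card_pair hab).symm
      _ ≤ _ := Finset.card_le_card this
  -- the union subgraph
  have hUsub : IsSubgraph (V1 ∪ (V2 ∪ V3)) (E1 ∪ (E2 ∪ E3)) V E := by
    refine ⟨?_, ?_, ?_⟩
    · intro e he
      rcases Finset.mem_union.1 he with he | he
      · exact ⟨(hsub1.1 e he).1, fun v hv => Finset.mem_union_left _ ((hsub1.1 e he).2 v hv)⟩
      · rcases Finset.mem_union.1 he with he | he
        · exact ⟨(hsub2.1 e he).1, fun v hv =>
            Finset.mem_union_right _ (Finset.mem_union_left _ ((hsub2.1 e he).2 v hv))⟩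
        · exact ⟨(hsub3.1 e he).1, fun v hv =>
            Finset.mem_union_right _ (Finset.mem_union_right _ ((hsub3.1 e he).2 v hv))⟩
    · exact Finset.union_subset hsub1.2.1 (Finset.union_subset hsub2.2.1 hsub3.2.1)
    · exact Finset.union_subset hsub1.2.2 (Finset.union_subset hsub2.2.2 hsub3.2.2)
  refine lift3_false hS hab hac hbc hea heb hec hUsub
    (by simp [hv01, hv02, hv03]) (Finset.mem_union_left _ ha1)
    (Finset.mem_union_left _ hb1)
    (Finset.mem_union_right _ (Finset.mem_union_left _ hc2')) ?_
  push_cast at *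
  omega

end Aux2
section Aux3
set_option linter.unusedSectionVars false
variable {α : Type*} [DecidableEq α]

lemma edgesAt_card_split (Ei : Finset (Sym2 α)) (v0 : α) :
    (Ei.filter (fun e => v0 ∉ e)).card + (edgesAt Ei v0).card = Ei.card := by
  rw [edgesAt]
  have := Finset.card_filter_add_card_filter_not (s := Ei) (p := fun e => v0 ∈ e)
  omega

lemma edgesAt_subset {E Ei : Finset (Sym2 α)} (h : Ei ⊆ E) (v0 : α) :
    edgesAt Ei v0 ⊆ edgesAt E v0 :=
  Finset.filter_subset_filter _ h

lemma erase_subgraph {V Vi : Finset α} {E Ei : Finset (Sym2 α)}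
    (hsub : IsSubgraph Vi Ei V E) (v0 : α) :
    IsSubgraph (Vi.erase v0) (Ei.filter (fun e => v0 ∉ e)) V E := by
  refine ⟨?_, (Finset.erase_subset _ _).trans hsub.2.1,
    (Finset.filter_subset _ _).trans hsub.2.2⟩
  intro e he
  obtain ⟨he, hv0⟩ := Finset.mem_filter.1 he
  refine ⟨(hsub.1 e he).1, fun v hv => Finset.mem_erase.2 ⟨?_, (hsub.1 e he).2 v hv⟩⟩
  intro h; exact hv0 (h ▸ hv)

lemma localdeg {V Vi : Finset α} {E Ei : Finset (Sym2 α)}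
    (hS : IsSparse V E) (hsub : IsSubgraph Vi Ei V E) (ht : IsTight Vi Ei)
    {v0 : α} (hv : v0 ∈ Vi) :
    (2 ≤ Vi.card → 1 ≤ (edgesAt Ei v0).card) ∧
    (3 ≤ Vi.card → 2 ≤ (edgesAt Ei v0).card) := by
  have hsplit := edgesAt_card_split Ei v0
  have part3 : 3 ≤ Vi.card → 2 ≤ (edgesAt Ei v0).card := by
    intro h3
    have hsub' := erase_subgraph hsub v0
    have hcard : (Vi.erase v0).card = Vi.card - 1 := Finset.card_erase_of_mem hv
    have h2 : 2 ≤ (Vi.erase v0).card := by omega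
    have hle := hS.2 _ _ hsub' h2
    have hEi := tight_card_eq ht (by omega)
    rw [hcard] at hle
    push_cast at hle hEi ⊢
    omega
  refine ⟨?_, part3⟩
  intro h2
  rcases Nat.lt_or_ge Vi.card 3 with hlt | hge
  · -- Vi.card = 2
    have hc2 : Vi.card = 2 := by omega
    have hEi := tight_card_eq ht h2
    rw [hc2] at hEi
    have hEcard : Ei.card = 1 := by push_cast at hEi; omega
    obtain ⟨e, hEe⟩ := Finset.card_eq_one.1 hEcard
    have heE : e ∈ Ei := hEe ▸ Finset.mem_singleton_self e
    have hv0e : v0 ∈ e := by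
      obtain ⟨hd, hm⟩ := hsub.1 e heE
      revert hd hm
      induction e using Sym2.inductionOn with
      | _ x y =>
        intro hd hm
        rw [Sym2.mk_isDiag_iff] at hd
        have hx : x ∈ Vi := hm x (by simp [Sym2.mem_iff])
        have hy : y ∈ Vi := hm y (by simp [Sym2.mem_iff])
        rw [Sym2.mem_iff]
        by_contra hcon
        push_neg at hcon
        have : ({v0, x, y} : Finset α) ⊆ Vi := by
          intro v hvv
          rcases Finset.mem_insert.1 hvv with rfl | hvv
          · exact hv
          · rcases Finset.mem_insert.1 hvv with rfl | hvv
            · exact hx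
            · exact Finset.mem_singleton.1 hvv ▸ hy
        have hge3 : 3 ≤ Vi.card := by
          have h33 : ({v0, x, y} : Finset α).card = 3 := by
            rw [Finset.card_insert_of_notMem, Finset.card_insert_of_notMem,
              Finset.card_singleton]
            · simpa using hd
            · simp only [Finset.mem_insert, Finset.mem_singleton]
              push_neg
              exact hcon
          calc 3 = ({v0, x, y} : Finset α).card := h33.symm
            _ ≤ Vi.card := Finset.card_le_card this
        omega
    have : e ∈ edgesAt Ei v0 := Finset.mem_filter.2 ⟨heE, hv0e⟩
    exact Finset.card_pos.2 ⟨e, this⟩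
  · exact le_trans (by norm_num) (part3 hge)

end Aux3
section Aux4
set_option linter.unusedSectionVars false
set_option maxHeartbeats 1000000
variable {α : Type*} [DecidableEq α]

lemma Em_pos {I : Type*} (Vi : I → Finset α) (Ei : I → Finset (Sym2 α))
    (k : ℕ) (m : ℕ → α) (i : I)
    (h : k = 4 ∧ (Finset.range k).image m ⊆ Vi i) :
    Em Vi Ei k m i = (Ei i).filter (fun e => m 0 ∉ e) ∪ {s(m 2, m 3)} := by
  simp only [Em]; rw [if_pos h]

lemma Em_neg {I : Type*} (Vi : I → Finset α) (Ei : I → Finset (Sym2 α))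
    (k : ℕ) (m : ℕ → α) (i : I)
    (h : ¬ (k = 4 ∧ (Finset.range k).image m ⊆ Vi i)) :
    Em Vi Ei k m i = (Ei i).filter (fun e => m 0 ∉ e) := by
  simp only [Em]; rw [if_neg h]

lemma main_helper {I : Type*} [Fintype I]
    {V : Finset α} {E : Finset (Sym2 α)}
    {Vi : I → Finset α} {Ei : I → Finset (Sym2 α)}
    (hS : IsSparse V E) (hV : 1 < V.card)
    (hDec : IsMaxTightDecomp V E Vi Ei)
    (k : ℕ) (m : ℕ → α)
    (hk1 : 1 ≤ k) (hk4 : k ≤ 4)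
    (hmV : ∀ z ∈ Finset.range k, m z ∈ V)
    (hinj : Set.InjOn m ↑(Finset.range k))
    (hD : edgesAt E (m 0) = ((Finset.range k).erase 0).image (fun z => s(m 0, m z)))
    (hblk : k = 4 → ∀ V' E', IsSubgraph V' E' V E → m 0 ∉ V' → m 2 ∈ V' → m 3 ∈ V' →
      (E'.card : ℤ) ≤ 2 * V'.card - 4) :
    IsMarking V E Vi Ei k m ∧
      IsSparse (redV Vi Ei m) (redE Vi Ei k m) ∧
      IsMaxTightDecomp (redV Vi Ei m) (redE Vi Ei k m)
        (fun i : {i : I // inIm Vi Ei m i} => Vm Vi m i.1)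
        (fun i : {i : I // inIm Vi Ei m i} => Em Vi Ei k m i.1) := by
  -- basic facts about the marking values
  have hmne : ∀ z z', z < k → z' < k → m z = m z' → z = z' := by
    intro z z' hz hz' h
    exact hinj (by simp [hz]) (by simp [hz']) h
  have hDedges : ∀ z, 1 ≤ z → z < k → s(m 0, m z) ∈ E := by
    intro z h1 hz
    have : s(m 0, m z) ∈ edgesAt E (m 0) := by
      rw [hD]
      exact Finset.mem_image.2 ⟨z, Finset.mem_erase.2 ⟨by omega, Finset.mem_range.2 hz⟩, rfl⟩
    exact (Finset.mem_filter.1 this).1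
  have hDcard : (edgesAt E (m 0)).card = k - 1 := by
    rw [hD, Finset.card_image_of_injOn, Finset.card_erase_of_mem
      (Finset.mem_range.2 (by omega)), Finset.card_range]
    intro z hz z' hz' h
    simp only [Finset.coe_erase, Set.mem_diff, Finset.coe_range, Set.mem_Iio,
      Set.mem_singleton_iff] at hz hz'
    rcases Sym2.eq_iff.1 h with ⟨_, h2⟩ | ⟨h1, h2⟩
    · exact hmne z z' hz.1 hz'.1 h2
    · exfalso
      have := hmne 0 z' (by omega) hz'.1 h1
      omega
  have heE : k = 4 → s(m 2, m 3) ∉ E := by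
    intro h4 he
    have hm23 : m 2 ≠ m 3 := fun h => by have := hmne 2 3 (by omega) (by omega) h; omega
    have hm023 : m 0 ∉ ({m 2, m 3} : Finset α) := by
      simp only [Finset.mem_insert, Finset.mem_singleton]
      push_neg
      constructor
      · intro h; have := hmne 0 2 (by omega) (by omega) h; omega
      · intro h; have := hmne 0 3 (by omega) (by omega) h; omega
    have hsub : IsSubgraph {m 2, m 3} {s(m 2, m 3)} V E := by
      refine ⟨?_, ?_, Finset.singleton_subset_iff.2 he⟩
      · intro e' he'
        rw [Finset.mem_singleton.1 he']
        refine ⟨by rw [Sym2.mk_isDiag_iff]; exact hm23, ?_⟩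
        intro v hv
        rcases Sym2.mem_iff.1 hv with rfl | rfl
        · exact Finset.mem_insert_self _ _
        · exact Finset.mem_insert_of_mem (Finset.mem_singleton_self _)
      · intro v hv
        rcases Finset.mem_insert.1 hv with rfl | hv
        · exact hmV _ (Finset.mem_range.2 (by omega))
        · exact Finset.mem_singleton.1 hv ▸ hmV _ (Finset.mem_range.2 (by omega))
    have := hblk h4 _ _ hsub hm023 (Finset.mem_insert_self _ _)
      (Finset.mem_insert_of_mem (Finset.mem_singleton_self _))
    rw [Finset.card_singleton, Finset.card_pair hm23] at this
    push_cast at this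
  have hm0e : k = 4 → m 0 ∉ s(m 2, m 3) := by
    intro h4 h
    rcases Sym2.mem_iff.1 h with h | h
    · have := hmne 0 2 (by omega) (by omega) h; omega
    · have := hmne 0 3 (by omega) (by omega) h; omega
  -- edges inside a component have their endpoints in the component
  have hcondl3 : ∀ i, (k = 4 ∧ (Finset.range k).image m ⊆ Vi i) →
      m 0 ∈ Vi i ∧ edgesAt (Ei i) (m 0) = edgesAt E (m 0) := by
    intro i ⟨h4, himg⟩
    have hmVi : ∀ z, z < k → m z ∈ Vi i := fun z hz =>
      himg (Finset.mem_image.2 ⟨z, Finset.mem_range.2 hz, rfl⟩)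
    have h0 : m 0 ∈ Vi i := hmVi 0 (by omega)
    have h1 : m 1 ∈ Vi i := hmVi 1 (by omega)
    have hcard2 : 2 ≤ (Vi i).card := by
      have hne : m 0 ≠ m 1 := fun h => by have := hmne 0 1 (by omega) (by omega) h; omega
      calc 2 = ({m 0, m 1} : Finset α).card := (Finset.card_pair hne).symm
        _ ≤ _ := Finset.card_le_card (by
            intro v hv
            rcases Finset.mem_insert.1 hv with rfl | hv
            · exact h0
            · exact Finset.mem_singleton.1 hv ▸ h1)
    have hedges : ∀ z, 1 ≤ z → z < k → s(m 0, m z) ∈ Ei i := by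
      intro z hz1 hzk
      refine edge_mem_tight hS (hDec.1 i).1 (hDec.1 i).2.1 (hDedges z hz1 hzk) ?_ hcard2
      intro v hv
      rcases Sym2.mem_iff.1 hv with rfl | rfl
      · exact h0
      · exact hmVi z hzk
    refine ⟨h0, Finset.Subset.antisymm (edgesAt_subset (hDec.1 i).1.2.2 _) ?_⟩
    intro e' he'
    rw [hD] at he'
    obtain ⟨z, hz, rfl⟩ := Finset.mem_image.1 he'
    obtain ⟨hz0, hzk⟩ := Finset.mem_erase.1 hz
    refine Finset.mem_filter.2 ⟨hedges z (by omega) (Finset.mem_range.1 hzk), ?_⟩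
    simp [Sym2.mem_iff]
  -- classification of components
  have hnotin : ∀ i, m 0 ∉ Vi i → Vm Vi m i = Vi i ∧ Em Vi Ei k m i = Ei i := by
    intro i h0
    constructor
    · exact Finset.erase_eq_of_notMem h0
    · rw [Em_neg]
      · apply Finset.filter_true_of_mem
        intro e' he' hm0
        exact h0 (((hDec.1 i).1.1 e' he').2 _ hm0)
      · rintro ⟨h4, himg⟩
        exact h0 (himg (Finset.mem_image.2 ⟨0, Finset.mem_range.2 (by omega), rfl⟩))
  have hl23 : ∀ i, inIm Vi Ei m i → m 0 ∈ Vi i →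
      (edgesAt (Ei i) (m 0)).card = 2 ∨ (edgesAt (Ei i) (m 0)).card = 3 := by
    intro i hi h0
    have hc2 : 2 ≤ (Vi i).card := by
      by_contra h
      push_neg at h
      exact hi.1 (Finset.eq_singleton_iff_unique_mem.2
        ⟨h0, fun x hx => Finset.card_le_one.1 (by omega) x hx (m 0) h0⟩)
    have h1 := (localdeg hS (hDec.1 i).1 (hDec.1 i).2.1 h0).1 hc2
    have hle : (edgesAt (Ei i) (m 0)).card ≤ k - 1 := by
      have := Finset.card_le_card (edgesAt_subset (hDec.1 i).1.2.2 (m 0))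
      omega
    have hne1 := hi.2
    omega
  have hl2card : ∀ i, m 0 ∈ Vi i → (edgesAt (Ei i) (m 0)).card = 2 → 3 ≤ (Vi i).card := by
    intro i h0 hl2
    obtain ⟨e1, e2, hne, hpair⟩ := Finset.card_eq_two.1 hl2
    have he1 : e1 ∈ edgesAt (Ei i) (m 0) := by rw [hpair]; simp
    have he2 : e2 ∈ edgesAt (Ei i) (m 0) := by rw [hpair]; simp
    obtain ⟨he1E, he1m⟩ := Finset.mem_filter.1 he1
    obtain ⟨he2E, he2m⟩ := Finset.mem_filter.1 he2
    obtain ⟨w1, hw1ne, hw1V, hw1e⟩ := edge_out (hDec.1 i).1.1 he1E he1m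
    obtain ⟨w2, hw2ne, hw2V, hw2e⟩ := edge_out (hDec.1 i).1.1 he2E he2m
    have hww : w1 ≠ w2 := by rintro rfl; exact hne (hw1e.trans hw2e.symm)
    have hsub : ({m 0, w1, w2} : Finset α) ⊆ Vi i := by
      intro v hv
      rcases Finset.mem_insert.1 hv with rfl | hv
      · exact h0
      · rcases Finset.mem_insert.1 hv with rfl | hv
        · exact hw1V
        · exact Finset.mem_singleton.1 hv ▸ hw2V
    have hcard3 : ({m 0, w1, w2} : Finset α).card = 3 := by
      rw [Finset.card_insert_of_notMem (by
        simp only [Finset.mem_insert, Finset.mem_singleton]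
        push_neg
        exact ⟨fun h => hw1ne h.symm, fun h => hw2ne h.symm⟩),
        Finset.card_insert_of_notMem (by simp only [Finset.mem_singleton]; exact hww),
        Finset.card_singleton]
    calc 3 = ({m 0, w1, w2} : Finset α).card := hcard3.symm
      _ ≤ _ := Finset.card_le_card hsub
  have hl3cond : ∀ i, m 0 ∈ Vi i → (edgesAt (Ei i) (m 0)).card = 3 →
      (k = 4 ∧ (Finset.range k).image m ⊆ Vi i) ∧
        edgesAt (Ei i) (m 0) = edgesAt E (m 0) ∧
        ∀ z, 1 ≤ z → z < k → m z ∈ (Vi i).erase (m 0) := by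
    intro i h0 hl3
    have hk4' : k = 4 := by
      have := Finset.card_le_card (edgesAt_subset (hDec.1 i).1.2.2 (m 0))
      omega
    have hEat : edgesAt (Ei i) (m 0) = edgesAt E (m 0) :=
      Finset.eq_of_subset_of_card_le (edgesAt_subset (hDec.1 i).1.2.2 _) (by omega)
    have hzmem : ∀ z, 1 ≤ z → z < k → m z ∈ (Vi i).erase (m 0) := by
      intro z h1 hz
      have hmm : s(m 0, m z) ∈ edgesAt (Ei i) (m 0) := by
        rw [hEat, hD]
        exact Finset.mem_image.2 ⟨z, Finset.mem_erase.2 ⟨by omega, Finset.mem_range.2 hz⟩, rfl⟩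
      have hmem : s(m 0, m z) ∈ Ei i := (Finset.mem_filter.1 hmm).1
      refine Finset.mem_erase.2 ⟨fun h => ?_,
        ((hDec.1 i).1.1 _ hmem).2 (m z) (by simp [Sym2.mem_iff])⟩
      have := hmne z 0 hz (by omega) h
      omega
    refine ⟨⟨hk4', ?_⟩, hEat, hzmem⟩
    intro x hx
    obtain ⟨z, hz, rfl⟩ := Finset.mem_image.1 hx
    rcases Nat.eq_zero_or_pos z with rfl | hz1
    · exact h0
    · exact Finset.mem_of_mem_erase (hzmem z hz1 (Finset.mem_range.1 hz))
  have hcond3 : ∀ i, (k = 4 ∧ (Finset.range k).image m ⊆ Vi i) →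
      (edgesAt (Ei i) (m 0)).card = 3 := by
    intro i hc
    rw [(hcondl3 i hc).2, hDcard, hc.1]
  have hclass : ∀ i, inIm Vi Ei m i →
      (m 0 ∉ Vi i ∧ Vm Vi m i = Vi i ∧ Em Vi Ei k m i = Ei i) ∨
      (m 0 ∈ Vi i ∧ (edgesAt (Ei i) (m 0)).card = 2 ∧
        Em Vi Ei k m i = (Ei i).filter (fun e => m 0 ∉ e) ∧ 3 ≤ (Vi i).card) ∨
      (m 0 ∈ Vi i ∧ (edgesAt (Ei i) (m 0)).card = 3 ∧ k = 4 ∧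
        (Finset.range k).image m ⊆ Vi i ∧
        Em Vi Ei k m i = (Ei i).filter (fun e => m 0 ∉ e) ∪ {s(m 2, m 3)} ∧
        edgesAt (Ei i) (m 0) = edgesAt E (m 0) ∧
        m 1 ∈ Vm Vi m i ∧ m 2 ∈ Vm Vi m i ∧ m 3 ∈ Vm Vi m i) := by
    intro i hi
    by_cases h0 : m 0 ∈ Vi i
    · rcases hl23 i hi h0 with h2 | h3
      · refine Or.inr (Or.inl ⟨h0, h2, ?_, hl2card i h0 h2⟩)
        apply Em_neg
        intro hc
        have := hcond3 i hc
        omega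
      · obtain ⟨hc, hEat, hzmem⟩ := hl3cond i h0 h3
        obtain ⟨hk4', himg⟩ := hc
        refine Or.inr (Or.inr ⟨h0, h3, hk4', himg,
          Em_pos _ _ _ _ _ ⟨hk4', himg⟩, hEat, ?_, ?_, ?_⟩)
        · exact hzmem 1 (by omega) (by omega)
        · exact hzmem 2 (by omega) (by omega)
        · exact hzmem 3 (by omega) (by omega)
    · exact Or.inl ⟨h0, (hnotin i h0).1, (hnotin i h0).2⟩
  -- reduced graph membership facts
  have hVm_sub_red : ∀ i, inIm Vi Ei m i → Vm Vi m i ⊆ redV Vi Ei m := by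
    intro i hi v hv
    exact Finset.mem_biUnion.2 ⟨i, Finset.mem_filter.2 ⟨Finset.mem_univ _, hi⟩, hv⟩
  have hEm_sub_red : ∀ i, inIm Vi Ei m i → Em Vi Ei k m i ⊆ redE Vi Ei k m := by
    intro i hi e' he'
    exact Finset.mem_biUnion.2 ⟨i, Finset.mem_filter.2 ⟨Finset.mem_univ _, hi⟩, he'⟩
  have hredV_sub : redV Vi Ei m ⊆ V.erase (m 0) := by
    intro v hv
    obtain ⟨i, _, hv⟩ := Finset.mem_biUnion.1 hv
    obtain ⟨hne, hvV⟩ := Finset.mem_erase.1 hv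
    exact Finset.mem_erase.2 ⟨hne, (hDec.1 i).1.2.1 hvV⟩
  have hEm_mem : ∀ i, ∀ e' ∈ Em Vi Ei k m i, (m 0 ∉ e') ∧
      (e' ∈ Ei i ∨ (k = 4 ∧ (Finset.range k).image m ⊆ Vi i ∧ e' = s(m 2, m 3))) := by
    intro i e' he'
    by_cases hc : k = 4 ∧ (Finset.range k).image m ⊆ Vi i
    · rw [Em_pos _ _ _ _ _ hc] at he'
      rcases Finset.mem_union.1 he' with he' | he'
      · obtain ⟨h1, h2⟩ := Finset.mem_filter.1 he'
        exact ⟨h2, Or.inl h1⟩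
      · rw [Finset.mem_singleton.1 he']
        exact ⟨hm0e hc.1, Or.inr ⟨hc.1, hc.2, rfl⟩⟩
    · rw [Em_neg _ _ _ _ _ hc] at he'
      obtain ⟨h1, h2⟩ := Finset.mem_filter.1 he'
      exact ⟨h2, Or.inl h1⟩
  have hredE_mem : ∀ e' ∈ redE Vi Ei k m, (m 0 ∉ e') ∧
      (e' ∈ E ∨ (k = 4 ∧ e' = s(m 2, m 3))) := by
    intro e' he'
    obtain ⟨i, _, he'⟩ := Finset.mem_biUnion.1 he'
    obtain ⟨h1, h2⟩ := hEm_mem i e' he'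
    refine ⟨h1, ?_⟩
    rcases h2 with h2 | ⟨h4, _, h5⟩
    · exact Or.inl ((hDec.1 i).1.2.2 h2)
    · exact Or.inr ⟨h4, h5⟩
  -- graph structure of the components of the reduced graph
  have hGm : ∀ i, inIm Vi Ei m i → IsGraph (Vm Vi m i) (Em Vi Ei k m i) := by
    intro i hi e' he'
    obtain ⟨hm0, h2⟩ := hEm_mem i e' he'
    rcases h2 with h2 | ⟨h4, himg, rfl⟩
    · refine ⟨((hDec.1 i).1.1 e' h2).1, fun v hv => Finset.mem_erase.2
        ⟨fun h => hm0 (h ▸ hv), ((hDec.1 i).1.1 e' h2).2 v hv⟩⟩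
    · constructor
      · rw [Sym2.mk_isDiag_iff]
        intro h
        have := hmne 2 3 (by omega) (by omega) h
        omega
      · intro v hv
        have hmem : ∀ z, z < k → m z ∈ Vi i := fun z hz =>
          himg (Finset.mem_image.2 ⟨z, Finset.mem_range.2 hz, rfl⟩)
        rcases Sym2.mem_iff.1 hv with rfl | rfl
        · refine Finset.mem_erase.2 ⟨fun h => ?_, hmem 2 (by omega)⟩
          have := hmne 2 0 (by omega) (by omega) h
          omega
        · refine Finset.mem_erase.2 ⟨fun h => ?_, hmem 3 (by omega)⟩
          have := hmne 3 0 (by omega) (by omega) h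
          omega
  have hsubred : ∀ i, inIm Vi Ei m i →
      IsSubgraph (Vm Vi m i) (Em Vi Ei k m i) (redV Vi Ei m) (redE Vi Ei k m) := by
    intro i hi
    exact ⟨hGm i hi, hVm_sub_red i hi, hEm_sub_red i hi⟩
  have hredGraph : IsGraph (redV Vi Ei m) (redE Vi Ei k m) := by
    intro e' he'
    obtain ⟨i, hif, he'⟩ := Finset.mem_biUnion.1 he'
    have hi : inIm Vi Ei m i := (Finset.mem_filter.1 hif).2
    obtain ⟨hd, hend⟩ := hGm i hi e' he'
    exact ⟨hd, fun v hv => hVm_sub_red i hi (hend v hv)⟩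
  -- sparsity of the reduced graph
  have hredSparse : IsSparse (redV Vi Ei m) (redE Vi Ei k m) := by
    refine ⟨hredGraph, ?_⟩
    intro V' E' hsub' hc2
    have hV'sub : V' ⊆ V := fun v hv =>
      Finset.mem_of_mem_erase (hredV_sub (hsub'.2.1 hv))
    by_cases hall : E' ⊆ E
    · exact hS.2 V' E' ⟨hsub'.1, hV'sub, hall⟩ hc2
    · obtain ⟨e0, he0, he0E⟩ := Finset.not_subset.1 hall
      obtain ⟨hk4', he0eq⟩ := ((hredE_mem e0 (hsub'.2.2 he0)).2).resolve_left he0E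
      subst he0eq
      have herase_sub : E'.erase s(m 2, m 3) ⊆ E := by
        intro x hx
        obtain ⟨hxne, hxE'⟩ := Finset.mem_erase.1 hx
        rcases (hredE_mem x (hsub'.2.2 hxE')).2 with h | ⟨_, h⟩
        · exact h
        · exact absurd h hxne
      have hsubG : IsSubgraph V' (E'.erase s(m 2, m 3)) V E := by
        refine ⟨?_, hV'sub, herase_sub⟩
        intro x hx
        exact hsub'.1 x (Finset.mem_of_mem_erase hx)
      have hm0V' : m 0 ∉ V' := fun h =>
        (Finset.mem_erase.1 (hredV_sub (hsub'.2.1 h))).1 rfl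
      have hm2V' : m 2 ∈ V' := (hsub'.1 _ he0).2 (m 2) (by simp [Sym2.mem_iff])
      have hm3V' : m 3 ∈ V' := (hsub'.1 _ he0).2 (m 3) (by simp [Sym2.mem_iff])
      have := hblk hk4' V' _ hsubG hm0V' hm2V' hm3V'
      rw [Finset.card_erase_of_mem he0] at this
      have hpos : 0 < E'.card := Finset.card_pos.2 ⟨_, he0⟩
      push_cast at this ⊢
      omega
  -- tightness of the reduced components
  have htight : ∀ i, inIm Vi Ei m i → IsTight (Vm Vi m i) (Em Vi Ei k m i) := by
    intro i hi
    have hsp := sparse_of_subgraph hredSparse (hsubred i hi)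
    rcases hclass i hi with ⟨h0, hVeq, hEeq⟩ | ⟨h0, hl2, hEeq, hc3⟩ |
      ⟨h0, hl3, hk4', himg, hEeq, hEat, h1m, h2m, h3m⟩
    · rw [hVeq, hEeq]
      exact (hDec.1 i).2.1
    · refine ⟨hsp, Or.inr ?_⟩
      have hsplit := edgesAt_card_split (Ei i) (m 0)
      have hEcnt := tight_card_eq (hDec.1 i).2.1 (by omega)
      have hVcnt : (Vm Vi m i).card = (Vi i).card - 1 := Finset.card_erase_of_mem h0
      rw [hEeq, hVcnt]
      push_cast
      push_cast at hEcnt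
      omega
    · refine ⟨hsp, Or.inr ?_⟩
      have hsplit := edgesAt_card_split (Ei i) (m 0)
      have hc2 : 2 ≤ (Vi i).card := by
        have h1V : m 1 ∈ Vi i := Finset.mem_of_mem_erase h1m
        have hne : m 0 ≠ m 1 := fun h => by
          have := hmne 0 1 (by omega) (by omega) h; omega
        calc 2 = ({m 0, m 1} : Finset α).card := (Finset.card_pair hne).symm
          _ ≤ _ := Finset.card_le_card (by
              intro v hv
              rcases Finset.mem_insert.1 hv with rfl | hv
              · exact h0
              · exact Finset.mem_singleton.1 hv ▸ h1V)
      have hEcnt := tight_card_eq (hDec.1 i).2.1 hc2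
      have hVcnt : (Vm Vi m i).card = (Vi i).card - 1 := Finset.card_erase_of_mem h0
      have henotin : s(m 2, m 3) ∉ (Ei i).filter (fun e => m 0 ∉ e) := by
        intro h
        exact heE hk4' ((hDec.1 i).1.2.2 (Finset.mem_filter.1 h).1)
      have hcardEm : (Em Vi Ei k m i).card = ((Ei i).filter (fun e => m 0 ∉ e)).card + 1 := by
        rw [hEeq, Finset.union_comm, ← Finset.insert_eq,
          Finset.card_insert_of_notMem henotin]
      rw [hcardEm, hVcnt]
      push_cast
      push_cast at hEcnt
      omega
  -- maximality of the reduced components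
  have hmax : ∀ i, inIm Vi Ei m i → ∀ V'' E'',
      IsSubgraph V'' E'' (redV Vi Ei m) (redE Vi Ei k m) → IsTight V'' E'' →
      Vm Vi m i ⊆ V'' → Em Vi Ei k m i ⊆ E'' → Vm Vi m i = V'' ∧ Em Vi Ei k m i = E'' := by
    intro i hi V'' E'' hsub'' ht'' hVsub hEsub
    have hm0V'' : m 0 ∉ V'' := fun h => (Finset.mem_erase.1 (hredV_sub (hsub''.2.1 h))).1 rfl
    have hE''m0 : ∀ e' ∈ E'', m 0 ∉ e' := fun e' h => (hredE_mem e' (hsub''.2.2 h)).1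
    have hV''V : V'' ⊆ V := fun v hv => Finset.mem_of_mem_erase (hredV_sub (hsub''.2.1 hv))
    rcases Nat.lt_or_ge V''.card 2 with hsmall | hbig
    · -- degenerate case |V''| ≤ 1
      have hE'' : E'' = ∅ := graph_edges_empty ht''.1.1 (by omega)
      have hEmi : Em Vi Ei k m i = ∅ := Finset.subset_empty.1 (hE'' ▸ hEsub)
      rcases hclass i hi with ⟨h0, hVeq, hEeq⟩ | ⟨h0, hl2, hEeq, hc3⟩ |
        ⟨h0, hl3, hk4', himg, hEeq, hEat, h1m, h2m, h3m⟩
      · have hne := tight_nonempty (hDec.1 i).2.1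
        have h1le : 1 ≤ (Vm Vi m i).card := by
          rw [hVeq]; exact Finset.card_pos.2 hne
        have hcc := Finset.card_le_card hVsub
        refine ⟨Finset.eq_of_subset_of_card_le hVsub (by omega), by rw [hEmi, hE'']⟩
      · exfalso
        have hVcnt : (Vm Vi m i).card = (Vi i).card - 1 := Finset.card_erase_of_mem h0
        have hcc := Finset.card_le_card hVsub
        omega
      · exfalso
        have hee : s(m 2, m 3) ∈ Em Vi Ei k m i := by
          rw [hEeq]; exact Finset.mem_union_right _ (Finset.mem_singleton_self _)
        rw [hEmi] at hee
        exact absurd hee (Finset.notMem_empty _)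
    have hcnt'' := tight_card_eq ht'' hbig
    by_cases hke : k = 4 ∧ s(m 2, m 3) ∈ E''
    · -- the special edge is used
      obtain ⟨hk4', heE''⟩ := hke
      obtain ⟨i0, hi0f, hei0⟩ := Finset.mem_biUnion.1 (hsub''.2.2 heE'')
      have hi0 : inIm Vi Ei m i0 := (Finset.mem_filter.1 hi0f).2
      have hi0e_notE : s(m 2, m 3) ∉ E := heE hk4'
      rcases hclass i0 hi0 with ⟨h00, hVeq0, hEeq0⟩ | ⟨h00, hl20, hEeq0, _⟩ |
        ⟨h00, hl30, _, himg0, hEeq0, hEat0, h1m0, h2m0, h3m0⟩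
      · exfalso; rw [hEeq0] at hei0; exact hi0e_notE ((hDec.1 i0).1.2.2 hei0)
      · exfalso; rw [hEeq0] at hei0
        exact hi0e_notE ((hDec.1 i0).1.2.2 (Finset.mem_filter.1 hei0).1)
      have hm23 : m 2 ≠ m 3 := fun h => by have := hmne 2 3 (by omega) (by omega) h; omega
      have hm2V'' : m 2 ∈ V'' := (hsub''.1 _ heE'').2 (m 2) (by simp [Sym2.mem_iff])
      have hm3V'' : m 3 ∈ V'' := (hsub''.1 _ heE'').2 (m 3) (by simp [Sym2.mem_iff])
      have hint : 2 ≤ (V'' ∩ Vm Vi m i0).card := by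
        calc 2 = ({m 2, m 3} : Finset α).card := (Finset.card_pair hm23).symm
          _ ≤ _ := Finset.card_le_card (by
              intro v hv
              rcases Finset.mem_insert.1 hv with rfl | hv
              · exact Finset.mem_inter.2 ⟨hm2V'', h2m0⟩
              · exact Finset.mem_singleton.1 hv ▸ Finset.mem_inter.2 ⟨hm3V'', h3m0⟩)
      obtain ⟨hWsub, hWt⟩ := union_tight hredSparse hsub'' (hsubred i0 hi0) ht''
        (htight i0 hi0) hint
      have hm0VW : m 0 ∉ V'' ∪ Vm Vi m i0 := fun h =>
        (Finset.mem_erase.1 (hredV_sub (hWsub.2.1 h))).1 rfl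
      have hEWm0 : ∀ e' ∈ E'' ∪ Em Vi Ei k m i0, m 0 ∉ e' := fun e' h =>
        (hredE_mem e' (hWsub.2.2 h)).1
      have heEW : s(m 2, m 3) ∈ E'' ∪ Em Vi Ei k m i0 := Finset.mem_union_left _ heE''
      have hEWsubE : (E'' ∪ Em Vi Ei k m i0).erase s(m 2, m 3) ⊆ E := by
        intro x hx
        obtain ⟨hxne, hxEW⟩ := Finset.mem_erase.1 hx
        rcases (hredE_mem x (hWsub.2.2 hxEW)).2 with h | ⟨_, h⟩
        · exact h
        · exact absurd h hxne
      have hWcnt := tight_card_eq hWt (le_trans hint (Finset.card_le_card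
        ((Finset.inter_subset_left).trans Finset.subset_union_left)))
      have hBcard : (edgesAt E (m 0)).card = 3 := by rw [hDcard, hk4']
      have hdisjB : Disjoint ((E'' ∪ Em Vi Ei k m i0).erase s(m 2, m 3)) (edgesAt E (m 0)) := by
        rw [Finset.disjoint_left]
        intro e' h1 h2
        exact hEWm0 e' (Finset.mem_of_mem_erase h1) ((Finset.mem_filter.1 h2).2)
      have hBend : ∀ e' ∈ edgesAt E (m 0), ∀ v ∈ e',
          v ∈ insert (m 0) (V'' ∪ Vm Vi m i0) := by
        intro e' he' v hv
        rw [hD] at he'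
        obtain ⟨z, hz, rfl⟩ := Finset.mem_image.1 he'
        obtain ⟨hz0, hzk⟩ := Finset.mem_erase.1 hz
        have hzk' := Finset.mem_range.1 hzk
        rcases Sym2.mem_iff.1 hv with rfl | rfl
        · exact Finset.mem_insert_self _ _
        · apply Finset.mem_insert_of_mem
          apply Finset.mem_union_right
          have hz1 : 1 ≤ z := by omega
          have hz4 : z < 4 := by omega
          interval_cases z
          · exact h1m0
          · exact h2m0
          · exact h3m0
      have hWsub2 : IsSubgraph (insert (m 0) (V'' ∪ Vm Vi m i0))
          ((E'' ∪ Em Vi Ei k m i0).erase s(m 2, m 3) ∪ edgesAt E (m 0)) V E := by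
        refine ⟨?_, Finset.insert_subset (hmV 0 (Finset.mem_range.2 (by omega)))
          (fun v hv => Finset.mem_of_mem_erase (hredV_sub (hWsub.2.1 hv))),
          Finset.union_subset hEWsubE (Finset.filter_subset _ _)⟩
        intro e' he'
        rcases Finset.mem_union.1 he' with he' | he'
        · have h1 := hWsub.1 e' (Finset.mem_of_mem_erase he')
          exact ⟨h1.1, fun v hv => Finset.mem_insert_of_mem (h1.2 v hv)⟩
        · exact ⟨(hS.1 e' (Finset.filter_subset _ _ he')).1, hBend e' he'⟩
      have hcardEW2 : ((E'' ∪ Em Vi Ei k m i0).erase s(m 2, m 3) ∪ edgesAt E (m 0)).card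
          = (E'' ∪ Em Vi Ei k m i0).card - 1 + 3 := by
        rw [Finset.card_union_of_disjoint hdisjB, Finset.card_erase_of_mem heEW, hBcard]
      have hcardVW2 : (insert (m 0) (V'' ∪ Vm Vi m i0)).card = (V'' ∪ Vm Vi m i0).card + 1 :=
        Finset.card_insert_of_notMem hm0VW
      have hWt2 : IsTight (insert (m 0) (V'' ∪ Vm Vi m i0))
          ((E'' ∪ Em Vi Ei k m i0).erase s(m 2, m 3) ∪ edgesAt E (m 0)) := by
        refine ⟨sparse_of_subgraph hS hWsub2, Or.inr ?_⟩
        have hEWpos : 0 < (E'' ∪ Em Vi Ei k m i0).card := Finset.card_pos.2 ⟨_, heEW⟩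
        rw [hcardEW2, hcardVW2]
        omega
      have hVi0Sub : Vi i0 ⊆ insert (m 0) (V'' ∪ Vm Vi m i0) := by
        intro v hv
        by_cases hv0 : v = m 0
        · exact hv0 ▸ Finset.mem_insert_self _ _
        · exact Finset.mem_insert_of_mem
            (Finset.mem_union_right _ (Finset.mem_erase.2 ⟨hv0, hv⟩))
      have hEi0Sub : Ei i0 ⊆ (E'' ∪ Em Vi Ei k m i0).erase s(m 2, m 3) ∪ edgesAt E (m 0) := by
        intro e' he'
        by_cases h' : m 0 ∈ e'
        · exact Finset.mem_union_right _ (by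
            rw [← hEat0]; exact Finset.mem_filter.2 ⟨he', h'⟩)
        · refine Finset.mem_union_left _ (Finset.mem_erase.2 ⟨?_, ?_⟩)
          · rintro rfl; exact hi0e_notE ((hDec.1 i0).1.2.2 he')
          · exact Finset.mem_union_right _ (by
              rw [hEeq0]; exact Finset.mem_union_left _ (Finset.mem_filter.2 ⟨he', h'⟩))
      obtain ⟨hVeq', hEeq'⟩ := (hDec.1 i0).2.2 _ _ hWsub2 hWt2 hVi0Sub hEi0Sub
      have hVm0_eq : Vm Vi m i0 = V'' ∪ Vm Vi m i0 := by
        show (Vi i0).erase (m 0) = _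
        rw [hVeq', Finset.erase_insert hm0VW]
      have hfil : (Ei i0).filter (fun e => m 0 ∉ e)
          = (E'' ∪ Em Vi Ei k m i0).erase s(m 2, m 3) := by
        have h1 : Finset.filter (fun e => m 0 ∉ e)
            ((E'' ∪ Em Vi Ei k m i0).erase s(m 2, m 3))
            = (E'' ∪ Em Vi Ei k m i0).erase s(m 2, m 3) :=
          Finset.filter_true_of_mem (fun e' h => hEWm0 e' (Finset.mem_of_mem_erase h))
        have h2 : Finset.filter (fun e => m 0 ∉ e) (edgesAt E (m 0)) = ∅ :=
          Finset.filter_false_of_mem (fun e' h => not_not_intro (Finset.mem_filter.1 h).2)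
        rw [hEeq', Finset.filter_union, h1, h2, Finset.union_empty]
      have hEm0_eq : Em Vi Ei k m i0 = E'' ∪ Em Vi Ei k m i0 := by
        conv_lhs => rw [hEeq0, hfil, Finset.union_comm _ ({s(m 2, m 3)} : Finset (Sym2 α)),
          ← Finset.insert_eq, Finset.insert_erase heEW]
      by_cases hii0 : i = i0
      · subst hii0
        constructor
        · refine Finset.Subset.antisymm hVsub ?_
          intro v hv
          rw [hVm0_eq]
          exact Finset.mem_union_left _ hv
        · refine Finset.Subset.antisymm hEsub ?_
          intro x hx
          rw [hEm0_eq]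
          exact Finset.mem_union_left _ hx
      · exfalso
        rcases hclass i hi with ⟨h0i, hVeqi, hEeqi⟩ | ⟨h0i, hl2i, hEeqi, _⟩ |
          ⟨h0i, _, _, himgi, _, _, _, _, _⟩
        · -- m 0 ∉ Vi i
          have hVsub0 : Vi i ⊆ Vi i0 := by
            intro v hv
            have h2 : v ∈ V'' ∪ Vm Vi m i0 :=
              Finset.mem_union_left _ (hVsub (by rw [hVeqi]; exact hv))
            have h3 : v ∈ Vm Vi m i0 := by rw [hVm0_eq]; exact h2
            exact Finset.mem_of_mem_erase h3
          have hEsub0 : Ei i ⊆ Ei i0 := by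
            intro x hx
            have hxE : x ∈ E := (hDec.1 i).1.2.2 hx
            have hxEW : x ∈ E'' ∪ Em Vi Ei k m i0 :=
              Finset.mem_union_left _ (hEsub (by rw [hEeqi]; exact hx))
            have hxEm0 : x ∈ Em Vi Ei k m i0 := by rw [hEm0_eq]; exact hxEW
            rcases (hEm_mem i0 x hxEm0).2 with h | ⟨_, _, rfl⟩
            · exact h
            · exact absurd hxE hi0e_notE
          obtain ⟨hVeqq, hEeqq⟩ := (hDec.1 i).2.2 _ _ (hDec.1 i0).1 (hDec.1 i0).2.1
            hVsub0 hEsub0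
          exact h0i (hVeqq ▸ h00)
        · -- local degree 2
          have hEsub0 : Ei i ⊆ Ei i0 := by
            intro x hx
            by_cases h' : m 0 ∈ x
            · have h1 : x ∈ edgesAt E (m 0) :=
                edgesAt_subset (hDec.1 i).1.2.2 _ (Finset.mem_filter.2 ⟨hx, h'⟩)
              rw [← hEat0] at h1
              exact (Finset.mem_filter.1 h1).1
            · have hxE : x ∈ E := (hDec.1 i).1.2.2 hx
              have hxEW : x ∈ E'' ∪ Em Vi Ei k m i0 :=
                Finset.mem_union_left _ (hEsub (by
                  rw [hEeqi]; exact Finset.mem_filter.2 ⟨hx, h'⟩))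
              have hxEm0 : x ∈ Em Vi Ei k m i0 := by rw [hEm0_eq]; exact hxEW
              rcases (hEm_mem i0 x hxEm0).2 with h | ⟨_, _, rfl⟩
              · exact h
              · exact absurd hxE hi0e_notE
          have hVsub0 : Vi i ⊆ Vi i0 := by
            intro v hv
            by_cases hv0 : v = m 0
            · exact hv0 ▸ h00
            · have h2 : v ∈ V'' ∪ Vm Vi m i0 :=
                Finset.mem_union_left _ (hVsub (Finset.mem_erase.2 ⟨hv0, hv⟩))
              have h3 : v ∈ Vm Vi m i0 := by rw [hVm0_eq]; exact h2
              exact Finset.mem_of_mem_erase h3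
          obtain ⟨hVeqq, hEeqq⟩ := (hDec.1 i).2.2 _ _ (hDec.1 i0).1 (hDec.1 i0).2.1
            hVsub0 hEsub0
          have hEine : (Ei i).Nonempty := by
            have hpos : 0 < (edgesAt (Ei i) (m 0)).card := by omega
            obtain ⟨x, hx⟩ := Finset.card_pos.1 hpos
            exact ⟨x, (Finset.mem_filter.1 hx).1⟩
          obtain ⟨x, hx⟩ := hEine
          exact hDec.2.2.2 i i0 hii0 x ⟨hx, hEeqq ▸ hx⟩
        · -- both components contain all marked vertices
          have h1i : m 1 ∈ Vi i :=
            himgi (Finset.mem_image.2 ⟨1, Finset.mem_range.2 (by omega), rfl⟩)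
          have h1i0 : m 1 ∈ Vi i0 := Finset.mem_of_mem_erase h1m0
          have hne01 : m 0 ≠ m 1 := fun h => by
            have := hmne 0 1 (by omega) (by omega) h; omega
          exact two_shared_false hS hDec hii0 hne01 h0i h1i h00 h1i0
    · -- the special edge is not used : E'' ⊆ E
      have hE''E : E'' ⊆ E := by
        intro e' h
        rcases (hredE_mem e' (hsub''.2.2 h)).2 with h2 | ⟨h4, rfl⟩
        · exact h2
        · exact absurd ⟨h4, h⟩ hke
      have hsubG : IsSubgraph V'' E'' V E := ⟨hsub''.1, hV''V, hE''E⟩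
      rcases hclass i hi with ⟨h0, hVeq, hEeq⟩ | ⟨h0, hl2, hEeq, hc3⟩ |
        ⟨h0, hl3, hk4', himg, hEeq, hEat, h1m, h2m, h3m⟩
      · have := (hDec.1 i).2.2 V'' E'' hsubG ht'' (hVeq ▸ hVsub) (hEeq ▸ hEsub)
        rw [hVeq, hEeq]
        exact this
      · -- lift by m 0 and the two local edges
        have hAsubE : edgesAt (Ei i) (m 0) ⊆ E :=
          (Finset.filter_subset _ _).trans (hDec.1 i).1.2.2
        have hAm0 : ∀ e' ∈ edgesAt (Ei i) (m 0), m 0 ∈ e' := fun e' h =>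
          (Finset.mem_filter.1 h).2
        have hdisjA : Disjoint E'' (edgesAt (Ei i) (m 0)) := by
          rw [Finset.disjoint_left]
          intro e' h1 h2
          exact hE''m0 e' h1 (hAm0 e' h2)
        have hT'sub : IsSubgraph (insert (m 0) V'') (E'' ∪ edgesAt (Ei i) (m 0)) V E := by
          refine ⟨?_, Finset.insert_subset ((hDec.1 i).1.2.1 h0) hV''V,
            Finset.union_subset hE''E hAsubE⟩
          intro e' he'
          rcases Finset.mem_union.1 he' with he' | he'
          · exact ⟨(hsub''.1 e' he').1, fun v hv =>
              Finset.mem_insert_of_mem ((hsub''.1 e' he').2 v hv)⟩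
          · have heEi : e' ∈ Ei i := (Finset.mem_filter.1 he').1
            refine ⟨((hDec.1 i).1.1 e' heEi).1, fun v hv => ?_⟩
            by_cases hv0 : v = m 0
            · exact hv0 ▸ Finset.mem_insert_self _ _
            · have hvm : v ∈ Vm Vi m i :=
                Finset.mem_erase.2 ⟨hv0, ((hDec.1 i).1.1 e' heEi).2 v hv⟩
              exact Finset.mem_insert_of_mem (hVsub hvm)
        have hcardE : (E'' ∪ edgesAt (Ei i) (m 0)).card = E''.card + 2 := by
          rw [Finset.card_union_of_disjoint hdisjA, hl2]
        have hcardV : (insert (m 0) V'').card = V''.card + 1 :=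
          Finset.card_insert_of_notMem hm0V''
        have hT't : IsTight (insert (m 0) V'') (E'' ∪ edgesAt (Ei i) (m 0)) := by
          refine ⟨sparse_of_subgraph hS hT'sub, Or.inr ?_⟩
          rw [hcardE, hcardV]
          omega
        have hViSub : Vi i ⊆ insert (m 0) V'' := by
          intro v hv
          by_cases hv0 : v = m 0
          · exact hv0 ▸ Finset.mem_insert_self _ _
          · exact Finset.mem_insert_of_mem (hVsub (Finset.mem_erase.2 ⟨hv0, hv⟩))
        have hEiSub : Ei i ⊆ E'' ∪ edgesAt (Ei i) (m 0) := by
          intro e' he'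
          by_cases h' : m 0 ∈ e'
          · exact Finset.mem_union_right _ (Finset.mem_filter.2 ⟨he', h'⟩)
          · exact Finset.mem_union_left _ (hEsub (by
              rw [hEeq]; exact Finset.mem_filter.2 ⟨he', h'⟩))
        obtain ⟨hVeq', hEeq'⟩ := (hDec.1 i).2.2 _ _ hT'sub hT't hViSub hEiSub
        constructor
        · refine Finset.Subset.antisymm hVsub ?_
          intro v hv
          refine Finset.mem_erase.2 ⟨fun h => hm0V'' (h ▸ hv), ?_⟩
          rw [hVeq']
          exact Finset.mem_insert_of_mem hv
        · have h1 : Finset.filter (fun e => m 0 ∉ e) E'' = E'' :=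
            Finset.filter_true_of_mem hE''m0
          have h2 : Finset.filter (fun e => m 0 ∉ e) (edgesAt (Ei i) (m 0)) = ∅ :=
            Finset.filter_false_of_mem (fun e' h => not_not_intro (hAm0 e' h))
          rw [hEeq, hEeq', Finset.filter_union, h1, h2, Finset.union_empty]
      · exfalso
        exact hke ⟨hk4', hEsub (by
          rw [hEeq]; exact Finset.mem_union_right _ (Finset.mem_singleton_self _))⟩
  -- disjointness of the reduced edge sets
  have hdisjEm : ∀ i j, i ≠ j → ∀ e', ¬ (e' ∈ Em Vi Ei k m i ∧ e' ∈ Em Vi Ei k m j) := by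
    rintro i j hij e' ⟨hei, hej⟩
    obtain ⟨_, hi2⟩ := hEm_mem i e' hei
    obtain ⟨_, hj2⟩ := hEm_mem j e' hej
    rcases hi2 with hi2 | ⟨hk4', himgi, rfl⟩
    · rcases hj2 with hj2 | ⟨hk4', himgj, rfl⟩
      · exact hDec.2.2.2 i j hij e' ⟨hi2, hj2⟩
      · exact heE hk4' ((hDec.1 i).1.2.2 hi2)
    · rcases hj2 with hj2 | ⟨_, himgj, _⟩
      · exact heE hk4' ((hDec.1 j).1.2.2 hj2)
      · have h0i := (hcondl3 i ⟨hk4', himgi⟩).1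
        have h0j := (hcondl3 j ⟨hk4', himgj⟩).1
        have h1i : m 1 ∈ Vi i :=
          himgi (Finset.mem_image.2 ⟨1, Finset.mem_range.2 (by omega), rfl⟩)
        have h1j : m 1 ∈ Vi j :=
          himgj (Finset.mem_image.2 ⟨1, Finset.mem_range.2 (by omega), rfl⟩)
        have hne01 : m 0 ≠ m 1 := fun h => by
          have := hmne 0 1 (by omega) (by omega) h; omega
        exact two_shared_false hS hDec hij hne01 h0i h1i h0j h1j
  -- the marking property
  have hmark : IsMarking V E Vi Ei k m := by
    refine ⟨hk1, hk4, hV, hmV, hinj, hD, ?_⟩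
    intro i h4 himg
    have hc : k = 4 ∧ (Finset.range k).image m ⊆ Vi i := ⟨h4, himg⟩
    have hl3 := hcond3 i hc
    have h0 := (hcondl3 i hc).1
    have hi : inIm Vi Ei m i := by
      constructor
      · intro hsing
        have h1i : m 1 ∈ Vi i :=
          himg (Finset.mem_image.2 ⟨1, Finset.mem_range.2 (by omega), rfl⟩)
        rw [hsing, Finset.mem_singleton] at h1i
        have := hmne 1 0 (by omega) (by omega) h1i
        omega
      · omega
    rcases hclass i hi with ⟨h0', _, _⟩ | ⟨_, hl2, _, _⟩ |
      ⟨_, _, _, _, hEeq, hEat, h1m, h2m, h3m⟩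
    · exact absurd h0 h0'
    · omega
    refine ⟨Vm Vi m i, Em Vi Ei k m i, htight i hi, m 1, Finset.notMem_erase _ _,
      h1m, h2m, h3m, ?_, ?_, ?_, ?_, ?_, ?_⟩
    · exact fun h => by have := hmne 1 2 (by omega) (by omega) h; omega
    · exact fun h => by have := hmne 1 3 (by omega) (by omega) h; omega
    · exact fun h => by have := hmne 2 3 (by omega) (by omega) h; omega
    · rw [hEeq]; exact Finset.mem_union_right _ (Finset.mem_singleton_self _)
    · exact (Finset.insert_erase h0).symm
    · have henotin : s(m 2, m 3) ∉ (Ei i).filter (fun e => m 0 ∉ e) := fun h =>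
        heE h4 ((hDec.1 i).1.2.2 (Finset.mem_filter.1 h).1)
      have hErase : (Em Vi Ei k m i).erase s(m 2, m 3)
          = (Ei i).filter (fun e => m 0 ∉ e) := by
        rw [hEeq, Finset.union_comm, ← Finset.insert_eq, Finset.erase_insert henotin]
      have hEat3 : edgesAt (Ei i) (m 0) = {s(m 0, m 1), s(m 0, m 2), s(m 0, m 3)} := by
        rw [hEat, hD, h4]
        have hr : (Finset.range 4).erase 0 = ({1, 2, 3} : Finset ℕ) := by decide
        rw [hr]
        simp [Finset.image_insert, Finset.image_singleton]
      rw [hErase, ← hEat3]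
      ext x
      simp only [edgesAt, Finset.mem_union, Finset.mem_filter]
      tauto
  refine ⟨hmark, hredSparse, ?_, ?_, ?_, ?_⟩
  · rintro ⟨i, hi⟩
    exact ⟨hsubred i hi, htight i hi, fun V'' E'' a b c d => hmax i hi V'' E'' a b c d⟩
  · intro v hv
    obtain ⟨i, hif, hvm⟩ := Finset.mem_biUnion.1 hv
    exact ⟨⟨i, (Finset.mem_filter.1 hif).2⟩, hvm⟩
  · intro e' he'
    obtain ⟨i, hif, hem⟩ := Finset.mem_biUnion.1 he'
    exact ⟨⟨i, (Finset.mem_filter.1 hif).2⟩, hem⟩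
  · rintro ⟨i, hi⟩ ⟨j, hj⟩ hij e'
    exact hdisjEm i j (fun h => hij (Subtype.ext h)) e'

end Aux4
set_option maxHeartbeats 2000000 in
/-- Every sparse graph with more than one vertex admits a
marking `m` such that the reduced graph `G^m` is sparse and
`{G_i^m}_{i ∈ I^m}` is a max-tight decomposition for `G^m`. -/
theorem exists_marking_with_sparse_reduced_graph
    {I : Type*} [Fintype I]
    (V : Finset α) (E : Finset (Sym2 α))
    (Vi : I → Finset α) (Ei : I → Finset (Sym2 α))
    (hSparse : IsSparse V E) (hV : 1 < V.card)
    (hDecomp : IsMaxTightDecomp V E Vi Ei) :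
    ∃ (k : ℕ) (m : ℕ → α), IsMarking V E Vi Ei k m ∧
      IsSparse (redV Vi Ei m) (redE Vi Ei k m) ∧
      IsMaxTightDecomp (redV Vi Ei m) (redE Vi Ei k m)
        (fun i : {i : I // inIm Vi Ei m i} => Vm Vi m i.1)
        (fun i : {i : I // inIm Vi Ei m i} => Em Vi Ei k m i.1) := by
  obtain ⟨v0, hv0V, hdeg⟩ := exists_low_degree hSparse hV
  have hout : ∀ e ∈ edgesAt E v0, ∃ w, w ≠ v0 ∧ w ∈ V ∧ e = s(v0, w) := by
    intro e he
    exact edge_out hSparse.1 ((Finset.mem_filter.1 he).1) ((Finset.mem_filter.1 he).2)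
  have hd4 : (edgesAt E v0).card = 0 ∨ (edgesAt E v0).card = 1 ∨
      (edgesAt E v0).card = 2 ∨ (edgesAt E v0).card = 3 := by omega
  rcases hd4 with hd | hd | hd | hd
  · -- degree 0
    set m : ℕ → α := fun _ => v0 with hm
    refine ⟨1, m, main_helper hSparse hV hDecomp 1 m (by omega) (by omega) ?_ ?_ ?_
      (fun h => absurd h (by omega))⟩
    · intro z _; exact hv0V
    · intro a ha b hb _
      simp only [Finset.coe_range, Set.mem_Iio] at ha hb
      omega
    · have h0 : edgesAt E v0 = ∅ := Finset.card_eq_zero.1 hd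
      have hr : (Finset.range 1).erase 0 = (∅ : Finset ℕ) := by decide
      rw [hr, Finset.image_empty]
      exact h0
  · -- degree 1
    obtain ⟨e1, hE1⟩ := Finset.card_eq_one.1 hd
    obtain ⟨w1, hw1ne, hw1V, hw1e⟩ := hout e1 (hE1 ▸ Finset.mem_singleton_self e1)
    set m : ℕ → α := fun n => if n = 0 then v0 else w1 with hm
    have hm0 : m 0 = v0 := by simp [hm]
    have hm1 : m 1 = w1 := by simp [hm]
    refine ⟨2, m, main_helper hSparse hV hDecomp 2 m (by omega) (by omega) ?_ ?_ ?_
      (fun h => absurd h (by omega))⟩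
    · intro z hz
      have := Finset.mem_range.1 hz
      interval_cases z
      · rw [hm0]; exact hv0V
      · rw [hm1]; exact hw1V
    · intro a ha b hb hab
      simp only [Finset.coe_range, Set.mem_Iio] at ha hb
      interval_cases a <;> interval_cases b
      · rfl
      · rw [hm0, hm1] at hab; exact absurd hab.symm hw1ne
      · rw [hm0, hm1] at hab; exact absurd hab hw1ne
      · rfl
    · have hr : (Finset.range 2).erase 0 = ({1} : Finset ℕ) := by decide
      rw [hr, Finset.image_singleton, hm0, hm1, ← hw1e, hE1]
  · -- degree 2
    obtain ⟨e1, e2, hne, hE2⟩ := Finset.card_eq_two.1 hd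
    obtain ⟨w1, hw1ne, hw1V, hw1e⟩ := hout e1 (by rw [hE2]; simp)
    obtain ⟨w2, hw2ne, hw2V, hw2e⟩ := hout e2 (by rw [hE2]; simp)
    have hww : w1 ≠ w2 := by rintro rfl; exact hne (hw1e.trans hw2e.symm)
    set m : ℕ → α := fun n => if n = 0 then v0 else if n = 1 then w1 else w2 with hm
    have hm0 : m 0 = v0 := by simp [hm]
    have hm1 : m 1 = w1 := by simp [hm]
    have hm2 : m 2 = w2 := by simp [hm]
    refine ⟨3, m, main_helper hSparse hV hDecomp 3 m (by omega) (by omega) ?_ ?_ ?_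
      (fun h => absurd h (by omega))⟩
    · intro z hz
      have := Finset.mem_range.1 hz
      interval_cases z
      · rw [hm0]; exact hv0V
      · rw [hm1]; exact hw1V
      · rw [hm2]; exact hw2V
    · intro a ha b hb hab
      simp only [Finset.coe_range, Set.mem_Iio] at ha hb
      interval_cases a <;> interval_cases b
      · rfl
      · rw [hm0, hm1] at hab; exact absurd hab.symm hw1ne
      · rw [hm0, hm2] at hab; exact absurd hab.symm hw2ne
      · rw [hm0, hm1] at hab; exact absurd hab hw1ne
      · rfl
      · rw [hm1, hm2] at hab; exact absurd hab hww
      · rw [hm0, hm2] at hab; exact absurd hab hw2ne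
      · rw [hm1, hm2] at hab; exact absurd hab.symm hww
      · rfl
    · have hr : (Finset.range 3).erase 0 = ({1, 2} : Finset ℕ) := by decide
      rw [hr, Finset.image_insert, Finset.image_singleton, hm0, hm1, hm2,
        ← hw1e, ← hw2e, hE2]
  · -- degree 3
    obtain ⟨e1, e2, e3, hne12, hne13, hne23, hE3⟩ := Finset.card_eq_three.1 hd
    obtain ⟨w1, hw1ne, hw1V, hw1e⟩ := hout e1 (by rw [hE3]; simp)
    obtain ⟨w2, hw2ne, hw2V, hw2e⟩ := hout e2 (by rw [hE3]; simp)
    obtain ⟨w3, hw3ne, hw3V, hw3e⟩ := hout e3 (by rw [hE3]; simp)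
    have hww12 : w1 ≠ w2 := by rintro rfl; exact hne12 (hw1e.trans hw2e.symm)
    have hww13 : w1 ≠ w3 := by rintro rfl; exact hne13 (hw1e.trans hw3e.symm)
    have hww23 : w2 ≠ w3 := by rintro rfl; exact hne23 (hw2e.trans hw3e.symm)
    have hw1E : s(v0, w1) ∈ E := by
      rw [← hw1e]; exact (Finset.mem_filter.1 (hE3 ▸ (by simp : e1 ∈ ({e1, e2, e3} : Finset (Sym2 α))) : e1 ∈ edgesAt E v0)).1
    have hw2E : s(v0, w2) ∈ E := by
      rw [← hw2e]; exact (Finset.mem_filter.1 (hE3 ▸ (by simp : e2 ∈ ({e1, e2, e3} : Finset (Sym2 α))) : e2 ∈ edgesAt E v0)).1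
    have hw3E : s(v0, w3) ∈ E := by
      rw [← hw3e]; exact (Finset.mem_filter.1 (hE3 ▸ (by simp : e3 ∈ ({e1, e2, e3} : Finset (Sym2 α))) : e3 ∈ edgesAt E v0)).1
    -- find an unblocked pair
    have htriple := blocked_triple hSparse hw1E hw2E hw3E hww12 hww13 hww23
    have hEat : edgesAt E v0 = {s(v0, w1), s(v0, w2), s(v0, w3)} := by
      rw [hE3, hw1e, hw2e, hw3e]
    obtain ⟨a, b, c, hab, hac, hbc, haE, hbE, hcE, hav0, hbv0, hcv0, hset, hnb⟩ :
        ∃ a b c : α, a ≠ b ∧ a ≠ c ∧ b ≠ c ∧ s(v0, a) ∈ E ∧ s(v0, b) ∈ E ∧ s(v0, c) ∈ E ∧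
          a ≠ v0 ∧ b ≠ v0 ∧ c ≠ v0 ∧
          ({s(v0, a), s(v0, b), s(v0, c)} : Finset (Sym2 α))
            = {s(v0, w1), s(v0, w2), s(v0, w3)} ∧ ¬ Blk V E v0 b c := by
      rcases htriple with h | h | h
      · exact ⟨w3, w1, w2, hww13.symm, hww23.symm, hww12, hw3E, hw1E, hw2E,
          hw3ne, hw1ne, hw2ne, by ext x; simp; tauto, h⟩
      · exact ⟨w1, w2, w3, hww12, hww13, hww23, hw1E, hw2E, hw3E,
          hw1ne, hw2ne, hw3ne, rfl, h⟩
      · exact ⟨w2, w1, w3, hww12.symm, hww23, hww13, hw2E, hw1E, hw3E,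
          hw2ne, hw1ne, hw3ne, by ext x; simp; tauto, h⟩
    have haV : a ∈ V := (hSparse.1 _ haE).2 a (by simp [Sym2.mem_iff])
    have hbV : b ∈ V := (hSparse.1 _ hbE).2 b (by simp [Sym2.mem_iff])
    have hcV : c ∈ V := (hSparse.1 _ hcE).2 c (by simp [Sym2.mem_iff])
    set m : ℕ → α := fun n => if n = 0 then v0 else if n = 1 then a
      else if n = 2 then b else c with hm
    have hm0 : m 0 = v0 := by simp [hm]
    have hm1 : m 1 = a := by simp [hm]
    have hm2 : m 2 = b := by simp [hm]
    have hm3 : m 3 = c := by simp [hm]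
    refine ⟨4, m, main_helper hSparse hV hDecomp 4 m (by omega) (by omega) ?_ ?_ ?_ ?_⟩
    · intro z hz
      have := Finset.mem_range.1 hz
      interval_cases z
      · rw [hm0]; exact hv0V
      · rw [hm1]; exact haV
      · rw [hm2]; exact hbV
      · rw [hm3]; exact hcV
    · intro x hx y hy hxy
      simp only [Finset.coe_range, Set.mem_Iio] at hx hy
      interval_cases x <;> interval_cases y
      · rfl
      · rw [hm0, hm1] at hxy; exact absurd hxy.symm hav0
      · rw [hm0, hm2] at hxy; exact absurd hxy.symm hbv0
      · rw [hm0, hm3] at hxy; exact absurd hxy.symm hcv0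
      · rw [hm0, hm1] at hxy; exact absurd hxy hav0
      · rfl
      · rw [hm1, hm2] at hxy; exact absurd hxy hab
      · rw [hm1, hm3] at hxy; exact absurd hxy hac
      · rw [hm0, hm2] at hxy; exact absurd hxy hbv0
      · rw [hm1, hm2] at hxy; exact absurd hxy.symm hab
      · rfl
      · rw [hm2, hm3] at hxy; exact absurd hxy hbc
      · rw [hm0, hm3] at hxy; exact absurd hxy hcv0
      · rw [hm1, hm3] at hxy; exact absurd hxy.symm hac
      · rw [hm2, hm3] at hxy; exact absurd hxy.symm hbc
      · rfl
    · have hr : (Finset.range 4).erase 0 = ({1, 2, 3} : Finset ℕ) := by decide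
      rw [hr, Finset.image_insert, Finset.image_insert, Finset.image_singleton,
        hm0, hm1, hm2, hm3, hEat, ← hset]
    · intro _ V' E' hsub hm0V' hm2V' hm3V'
      rw [hm2] at hm2V'
      rw [hm3] at hm3V'
      rw [hm0] at hm0V'
      by_contra hgt
      push_neg at hgt
      have hc2 : 2 ≤ V'.card := by
        calc 2 = ({b, c} : Finset α).card := (Finset.card_pair hbc).symm
          _ ≤ _ := Finset.card_le_card (by
              intro v hv
              rcases Finset.mem_insert.1 hv with rfl | hv
              · exact hm2V'
              · exact Finset.mem_singleton.1 hv ▸ hm3V')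
      have hle := hSparse.2 V' E' hsub hc2
      exact hnb ⟨V', E', hsub, hm0V', hm2V', hm3V', by omega⟩

end
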